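/- For every integer ℓ ≥ 1 and every vertex v ∈ V_n, the expected total excess connectivity weight of the ℓ-neighbourhood satisfies E[‖S_ℓ(v)‖_+] ≤ W_v·1{W_v > √(n·θ)} + W_v·(Γ_{2,n}+1)^{ℓ−1}·κ_{2,n}. -/

import Mathlib

open MeasureTheory ProbabilityTheory Real
open scoped ENNReal

noncomputable section
open Classical

/-- The set of vertices at graph distance at most `ℓ` from `v`, for the graph with
adjacency relation `A` on `Fin n`. -/
def nbhd {n : ℕ} (A : Fin n → Fin n → Prop) : ℕ → Fin n → Set (Fin n)
  | 0, v => {v}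
  | ℓ + 1, v => nbhd A ℓ v ∪ {u | ∃ w ∈ nbhd A ℓ v, A w u}

/-- `f` is a path of length `ℓ` for the adjacency relation `A`: `ℓ+1` pairwise distinct
vertices, consecutive ones joined by an edge. -/
def IsPathOn {n : ℕ} (A : Fin n → Fin n → Prop) (ℓ : ℕ) (f : Fin (ℓ + 1) → Fin n) : Prop :=
  Function.Injective f ∧ ∀ i : Fin ℓ, A (f i.castSucc) (f i.succ)

/-- total `p`-connectivity weight `‖U‖_p` of a vertex set `U`. -/
def wnorm {n : ℕ} (W : Fin n → ℝ) (p : ℝ) (U : Set (Fin n)) : ℝ :=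
  ∑ u : Fin n, Set.indicator U (fun u => W u ^ p) u

/-- `Γ_{p,n}` -/
def Gam (n : ℕ) (θ : ℝ) (W : Fin n → ℝ) (p : ℝ) : ℝ :=
  (∑ u : Fin n, W u ^ p) / (n * θ)

/-- total excess connectivity weight `‖U‖₊` of a vertex set `U`. -/
def wplus (n : ℕ) (θ : ℝ) (W : Fin n → ℝ) (U : Set (Fin n)) : ℝ :=
  ∑ u : Fin n, Set.indicator U (fun u => if Real.sqrt (n * θ) < W u then W u else 0) u

/-- `κ_{p,n}` -/
def kap (n : ℕ) (θ : ℝ) (W : Fin n → ℝ) (p : ℝ) : ℝ :=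
  (∑ u : Fin n, if Real.sqrt (n * θ) < W u then W u ^ p else 0) / (n * θ)

lemma nbhd_mem_path {n : ℕ} {A : Fin n → Fin n → Prop} :
    ∀ (ℓ : ℕ) (v u : Fin n), u ∈ nbhd A ℓ v →
      ∃ k, k ≤ ℓ ∧ ∃ f : Fin (k+1) → Fin n, IsPathOn A k f ∧ f 0 = v ∧ f (Fin.last k) = u := by
  intro ℓ
  induction ℓ with
  | zero =>
    intro v u hu
    simp only [nbhd, Set.mem_singleton_iff] at hu
    subst hu
    exact ⟨0, le_refl _, fun _ => u, ⟨fun a b _ => Fin.ext (by omega), fun i => i.elim0⟩,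
      rfl, rfl⟩
  | succ ℓ ih =>
    intro v u hu
    rcases hu with hu | ⟨w, hw, hA⟩
    · obtain ⟨k, hk, hf⟩ := ih v u hu
      exact ⟨k, hk.trans (Nat.le_succ _), hf⟩
    · obtain ⟨k, hk, f, ⟨hinj, hedge⟩, h0, hlast⟩ := ih v w hw
      by_cases hmem : ∃ j : Fin (k+1), f j = u
      · obtain ⟨j, hj⟩ := hmem
        refine ⟨j.val, by omega, fun i => f (Fin.castLE (by omega) i), ⟨?_, ?_⟩, ?_, ?_⟩
        · intro a b hab
          have h := hinj hab
          have h2 := congrArg Fin.val h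
          exact Fin.ext h2
        · intro i
          exact hedge ⟨i.val, by omega⟩
        · rw [← h0]
          exact congrArg f (Fin.ext (by simp))
        · rw [← hj]
          exact congrArg f (Fin.ext (by simp))
      · push_neg at hmem
        refine ⟨k + 1, by omega, Fin.snoc f u, ⟨?_, ?_⟩, ?_, ?_⟩
        · intro a b hab
          rcases Fin.eq_castSucc_or_eq_last a with ⟨a', rfl⟩ | rfl <;>
            rcases Fin.eq_castSucc_or_eq_last b with ⟨b', rfl⟩ | rfl
          · simp only [Fin.snoc_castSucc] at hab
            exact congrArg Fin.castSucc (hinj hab)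
          · simp only [Fin.snoc_castSucc, Fin.snoc_last] at hab
            exact absurd hab (hmem a')
          · simp only [Fin.snoc_castSucc, Fin.snoc_last] at hab
            exact absurd hab.symm (hmem b')
          · rfl
        · intro i
          rcases Fin.eq_castSucc_or_eq_last i with ⟨i', rfl⟩ | rfl
          · have h1 : (Fin.castSucc i').castSucc = Fin.castSucc (Fin.castSucc i') := rfl
            rw [Fin.succ_castSucc]
            simp only [Fin.snoc_castSucc]
            exact hedge i'
          · rw [Fin.succ_last]
            simp only [Fin.snoc_last]
            have : (Fin.last k).castSucc = Fin.castSucc (Fin.last k) := rfl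
            rw [this, Fin.snoc_castSucc, hlast]
            exact hA
        · have : (0 : Fin (k+2)) = Fin.castSucc 0 := rfl
          rw [this, Fin.snoc_castSucc, h0]
        · rw [Fin.snoc_last]

lemma meas_nbhd {n : ℕ} {Ω : Type} [MeasurableSpace Ω] (X : Fin n → Fin n → Ω → Bool)
    (hmeas : ∀ u v, Measurable (X u v)) :
    ∀ (ℓ : ℕ) (v u : Fin n),
      MeasurableSet {ω | u ∈ nbhd (fun a b => X a b ω = true) ℓ v} := by
  intro ℓ
  induction ℓ with
  | zero =>
    intro v u
    by_cases h : u = v <;> simp [nbhd, h]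
  | succ ℓ ih =>
    intro v u
    have : {ω | u ∈ nbhd (fun a b => X a b ω = true) (ℓ+1) v}
        = {ω | u ∈ nbhd (fun a b => X a b ω = true) ℓ v}
          ∪ ⋃ w : Fin n, ({ω | w ∈ nbhd (fun a b => X a b ω = true) ℓ v}
            ∩ (X w u) ⁻¹' {true}) := by
      ext ω
      simp only [nbhd, Set.mem_union, Set.mem_setOf_eq, Set.mem_iUnion, Set.mem_inter_iff,
        Set.mem_preimage, Set.mem_singleton_iff]
      try tauto
    rw [this]
    exact (ih v u).union (MeasurableSet.iUnion fun w =>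
      (ih v w).inter (hmeas w u (measurableSet_singleton true)))

def edgeIdx {n : ℕ} (a b : Fin n) (h : a ≠ b) : {p : Fin n × Fin n // p.1 < p.2} :=
  if hab : a < b then ⟨(a, b), hab⟩ else ⟨(b, a), h.lt_or_gt.resolve_left hab⟩

lemma edgeIdx_X {n : ℕ} {Ω : Type} (X : Fin n → Fin n → Ω → Bool)
    (hsymm : ∀ u v, X u v = X v u) (a b : Fin n) (h : a ≠ b) :
    X (edgeIdx a b h).1.1 (edgeIdx a b h).1.2 = X a b := by
  unfold edgeIdx
  split_ifs with hab
  · rfl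
  · exact hsymm b a

lemma edgeIdx_pair {n : ℕ} (a b : Fin n) (h : a ≠ b) :
    (edgeIdx a b h).1 = (a, b) ∨ (edgeIdx a b h).1 = (b, a) := by
  unfold edgeIdx
  split_ifs with hab
  · exact Or.inl rfl
  · exact Or.inr rfl

lemma path_prob {n : ℕ} {Ω : Type} [MeasurableSpace Ω] (P : Measure Ω)
    (X : Fin n → Fin n → Ω → Bool)
    (hsymm : ∀ u v, X u v = X v u)
    (hindep : iIndepFun
      (fun e : {p : Fin n × Fin n // p.1 < p.2} => X e.1.1 e.1.2) P)
    (k : ℕ) (f : Fin (k+1) → Fin n) (hf : Function.Injective f) :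
    P {ω | ∀ i : Fin k, X (f i.castSucc) (f i.succ) ω = true}
      = ∏ i : Fin k, P {ω | X (f i.castSucc) (f i.succ) ω = true} := by
  have hne : ∀ i : Fin k, f i.castSucc ≠ f i.succ := by
    intro i h
    have h2 := congrArg Fin.val (hf h)
    simp [Fin.val_succ] at h2
  set g : Fin k → {p : Fin n × Fin n // p.1 < p.2} :=
    fun i => edgeIdx (f i.castSucc) (f i.succ) (hne i) with hgdef
  have hgX : ∀ i : Fin k, X (g i).1.1 (g i).1.2 = X (f i.castSucc) (f i.succ) :=
    fun i => edgeIdx_X X hsymm _ _ (hne i)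
  have hg : Function.Injective g := by
    intro i j hij
    have hv : (g i).1 = (g j).1 := congrArg Subtype.val hij
    rcases edgeIdx_pair (f i.castSucc) (f i.succ) (hne i) with e1 | e1 <;>
      rcases edgeIdx_pair (f j.castSucc) (f j.succ) (hne j) with e2 | e2 <;>
      · rw [hgdef] at hv
        simp only at hv
        rw [e1, e2, Prod.mk.injEq] at hv
        obtain ⟨ha, hb⟩ := hv
        have ha' := congrArg Fin.val (hf ha)
        have hb' := congrArg Fin.val (hf hb)
        simp only [Fin.coe_castSucc, Fin.val_succ] at ha' hb'
        exact Fin.ext (by omega)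
  have hev : {ω | ∀ i : Fin k, X (f i.castSucc) (f i.succ) ω = true}
      = ⋂ e ∈ Finset.image g Finset.univ, (X e.1.1 e.1.2) ⁻¹' {true} := by
    ext ω
    simp only [Set.mem_setOf_eq, Set.mem_iInter, Finset.mem_image, Finset.mem_univ,
      true_and, Set.mem_preimage, Set.mem_singleton_iff]
    constructor
    · rintro h e ⟨i, rfl⟩
      rw [hgX i]
      exact h i
    · intro h i
      rw [← hgX i]
      exact h _ ⟨i, rfl⟩
  rw [hev, hindep.meas_biInter (fun e _ => ⟨{true}, measurableSet_singleton true, rfl⟩),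
    Finset.prod_image (fun i _ j _ hij => hg hij)]
  apply Finset.prod_congr rfl
  intro i _
  congr 1
  ext ω
  simp only [Set.mem_preimage, Set.mem_singleton_iff, Set.mem_setOf_eq]
  rw [hgX i]

def pathW (n : ℕ) (θ : ℝ) (W : Fin n → ℝ) (k : ℕ) (f : Fin (k+1) → Fin n) : ℝ :=
  ∏ i : Fin k, (W (f i.castSucc) * W (f i.succ) / (n * θ))

def Fsum (n : ℕ) (θ : ℝ) (W : Fin n → ℝ) (v : Fin n) (k : ℕ) (c : Fin n → ℝ) : ℝ :=
  ∑ f : Fin (k+1) → Fin n, if f 0 = v then pathW n θ W k f * c (f (Fin.last k)) else 0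

lemma Fsum_zero (n : ℕ) (θ : ℝ) (W : Fin n → ℝ) (v : Fin n) (c : Fin n → ℝ) :
    Fsum n θ W v 0 c = c v := by
  unfold Fsum pathW
  rw [← Equiv.sum_comp (Equiv.funUnique (Fin 1) (Fin n)).symm]
  simp [Equiv.funUnique]

lemma Fsum_succ (n : ℕ) (θ : ℝ) (W : Fin n → ℝ) (v : Fin n) (k : ℕ) (c : Fin n → ℝ) :
    Fsum n θ W v (k+1) c
      = Fsum n θ W v k (fun a => ∑ u : Fin n, (W a * W u / (n * θ)) * c u) := by
  have hsz : ∀ (g : Fin (k+1) → Fin n) (u : Fin n), (Fin.snoc g u : Fin (k+2) → Fin n) 0 = g 0 := by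
    intro g u
    rw [show (0 : Fin (k+2)) = Fin.castSucc 0 from rfl, Fin.snoc_castSucc]
  have hp : ∀ (g : Fin (k+1) → Fin n) (u : Fin n),
      pathW n θ W (k+1) (Fin.snoc g u)
        = pathW n θ W k g * (W (g (Fin.last k)) * W u / (n * θ)) := by
    intro g u
    unfold pathW
    rw [Fin.prod_univ_castSucc]
    congr 1
    · apply Finset.prod_congr rfl
      intro i _
      rw [show (Fin.castSucc i).castSucc = Fin.castSucc i.castSucc from rfl,
        Fin.snoc_castSucc, Fin.succ_castSucc, Fin.snoc_castSucc]
    · rw [show (Fin.last k).castSucc = Fin.castSucc (Fin.last k) from rfl,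
        Fin.snoc_castSucc, Fin.succ_last, Fin.snoc_last]
  have step : ∀ g : Fin (k+1) → Fin n,
      (∑ u : Fin n, if (Fin.snoc g u : Fin (k+2) → Fin n) 0 = v then
          pathW n θ W (k+1) (Fin.snoc g u)
            * c ((Fin.snoc g u : Fin (k+2) → Fin n) (Fin.last (k+1))) else 0)
        = (if g 0 = v then
            pathW n θ W k g * ∑ u : Fin n, (W (g (Fin.last k)) * W u / (n * θ)) * c u
          else 0) := by
    intro g
    by_cases h : g 0 = v
    · rw [if_pos h, Finset.mul_sum]
      apply Finset.sum_congr rfl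
      intro u _
      rw [if_pos (by rw [hsz g u]; exact h), hp g u, Fin.snoc_last, mul_assoc]
    · rw [if_neg h]
      apply Finset.sum_eq_zero
      intro u _
      rw [if_neg (by rw [hsz g u]; exact h)]
  unfold Fsum
  rw [← Equiv.sum_comp (Fin.snocEquiv (fun _ => Fin n)), Fintype.sum_prod_type,
    Finset.sum_comm]
  exact Finset.sum_congr rfl (fun g _ => step g)

lemma Fsum_mul (n : ℕ) (θ : ℝ) (W : Fin n → ℝ) (v : Fin n) (k : ℕ) (t : ℝ) :
    Fsum n θ W v k (fun a => W a * t)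
      = W v * ((∑ u : Fin n, W u ^ 2) / (n * θ)) ^ k * t := by
  induction k generalizing t with
  | zero => rw [Fsum_zero]; ring
  | succ k ih =>
    rw [Fsum_succ]
    have : (fun a => ∑ u : Fin n, (W a * W u / (↑n * θ)) * (W u * t))
        = fun a => W a * ((∑ u : Fin n, W u ^ 2) / (↑n * θ) * t) := by
      funext a
      rw [Finset.sum_congr rfl (fun u _ => show (W a * W u / (↑n * θ)) * (W u * t)
        = W a * (W u ^ 2 / (↑n * θ) * t) by ring), ← Finset.mul_sum]
      congr 1
      rw [← Finset.sum_mul, ← Finset.sum_div]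
    rw [this, ih]
    ring

lemma Fsum_cplus (n : ℕ) (θ : ℝ) (W : Fin n → ℝ) (v : Fin n) (k : ℕ) :
    Fsum n θ W v (k+1) (fun a => if Real.sqrt (n * θ) < W a then W a else 0)
      = W v * ((∑ u : Fin n, W u ^ 2) / (n * θ)) ^ k
          * ((∑ u : Fin n, if Real.sqrt (n * θ) < W u then W u ^ 2 else 0) / (n * θ)) := by
  rw [Fsum_succ]
  have : (fun a => ∑ u : Fin n, (W a * W u / (↑n * θ))
        * (if Real.sqrt (n * θ) < W u then W u else 0))
      = fun a => W a * ((∑ u : Fin n, if Real.sqrt (n * θ) < W u then W u ^ 2 else 0)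
          / (↑n * θ)) := by
    funext a
    rw [Finset.sum_congr rfl (fun u _ => show (W a * W u / (↑n * θ))
        * (if Real.sqrt (n * θ) < W u then W u else 0)
      = W a * ((if Real.sqrt (n * θ) < W u then W u ^ 2 else 0) / (↑n * θ)) by
        split_ifs <;> ring), ← Finset.mul_sum, ← Finset.sum_div]
  rw [this, Fsum_mul]


theorem stmt2
    (n : ℕ) (hn : 1 ≤ n) (θ : ℝ) (hθ : 0 < θ)
    (W : Fin n → ℝ) (hW : ∀ v, 0 < W v)
    {Ω : Type} [MeasurableSpace Ω] (P : Measure Ω) [IsProbabilityMeasure P]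
    (X : Fin n → Fin n → Ω → Bool)
    (hmeas : ∀ u v, Measurable (X u v))
    (hsymm : ∀ u v, X u v = X v u)
    (hdiag : ∀ v, X v v = fun _ => false)
    (hdist : ∀ u v, u ≠ v →
      P {ω | X u v ω = true} = ENNReal.ofReal (min (W u * W v / (n * θ)) 1))
    (hindep : iIndepFun
      (fun e : {p : Fin n × Fin n // p.1 < p.2} => X e.1.1 e.1.2) P) :
    ∀ ℓ : ℕ, 1 ≤ ℓ → ∀ v : Fin n,
      ∫ ω, wplus n θ W (nbhd (fun a b => X a b ω = true) ℓ v) ∂P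
        ≤ (if Real.sqrt (n * θ) < W v then W v else 0)
          + W v * (Gam n θ W 2 + 1) ^ (ℓ - 1) * kap n θ W 2 := by
  intro ℓ hℓ v
  obtain ⟨m, rfl⟩ : ∃ m, ℓ = m + 1 := ⟨ℓ - 1, by omega⟩
  have hnθ : 0 < (n : ℝ) * θ :=
    mul_pos (by exact_mod_cast Nat.pos_of_ne_zero (by omega)) hθ
  set c : Fin n → ℝ := fun u => if Real.sqrt (n * θ) < W u then W u else 0 with hc
  have hc0 : ∀ u, 0 ≤ c u := by
    intro u
    rw [hc]
    dsimp only
    split_ifs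
    · exact (hW u).le
    · exact le_refl 0
  have hpw0 : ∀ (k : ℕ) (f : Fin (k+1) → Fin n), 0 ≤ pathW n θ W k f := by
    intro k f
    unfold pathW
    apply Finset.prod_nonneg
    intro i _
    exact div_nonneg (mul_nonneg (hW _).le (hW _).le) hnθ.le
  have hE : ∀ u, MeasurableSet {ω | u ∈ nbhd (fun a b => X a b ω = true) (m+1) v} :=
    fun u => meas_nbhd X hmeas (m+1) v u
  -- Step 1 : compute the integral
  have h1 : ∫ ω, wplus n θ W (nbhd (fun a b => X a b ω = true) (m+1) v) ∂P
      = ∑ u : Fin n,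
          (P {ω | u ∈ nbhd (fun a b => X a b ω = true) (m+1) v}).toReal * c u := by
    have hrw : (fun ω => wplus n θ W (nbhd (fun a b => X a b ω = true) (m+1) v))
        = fun ω => ∑ u : Fin n,
            Set.indicator {ω' | u ∈ nbhd (fun a b => X a b ω' = true) (m+1) v}
              (fun _ => c u) ω := by
      funext ω
      unfold wplus
      apply Finset.sum_congr rfl
      intro u _
      by_cases h : u ∈ nbhd (fun a b => X a b ω = true) (m+1) v
      · rw [Set.indicator_of_mem h,
          Set.indicator_of_mem (show ω ∈ {ω' | u ∈ nbhd (fun a b => X a b ω' = true) (m+1) v} from h), hc]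
      · rw [Set.indicator_of_notMem h,
          Set.indicator_of_notMem (show ω ∉ {ω' | u ∈ nbhd (fun a b => X a b ω' = true) (m+1) v} from h)]
    rw [show (∫ ω, wplus n θ W (nbhd (fun a b => X a b ω = true) (m+1) v) ∂P)
        = ∫ ω, (fun ω => ∑ u : Fin n,
            Set.indicator {ω' | u ∈ nbhd (fun a b => X a b ω' = true) (m+1) v}
              (fun _ => c u) ω) ω ∂P from by rw [← hrw],
      integral_finset_sum _ (fun u _ => (integrable_const (c u)).indicator (hE u))]
    apply Finset.sum_congr rfl
    intro u _
    rw [integral_indicator_const _ (hE u), smul_eq_mul]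
    rfl
  rw [h1]
  -- Step 2 : per-vertex probability bound
  have h2 : ∀ u : Fin n,
      (P {ω | u ∈ nbhd (fun a b => X a b ω = true) (m+1) v}).toReal
        ≤ ∑ k ∈ Finset.range (m+2), ∑ f ∈ Finset.univ.filter
            (fun f : Fin (k+1) → Fin n =>
              Function.Injective f ∧ f 0 = v ∧ f (Fin.last k) = u),
            pathW n θ W k f := by
    intro u
    apply ENNReal.toReal_le_of_le_ofReal
      (Finset.sum_nonneg fun k _ => Finset.sum_nonneg fun f _ => hpw0 k f)
    calc P {ω | u ∈ nbhd (fun a b => X a b ω = true) (m+1) v}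
        ≤ P (⋃ k ∈ Finset.range (m+2), ⋃ f ∈ Finset.univ.filter
              (fun f : Fin (k+1) → Fin n =>
                Function.Injective f ∧ f 0 = v ∧ f (Fin.last k) = u),
              {ω | ∀ i : Fin k, X (f i.castSucc) (f i.succ) ω = true}) := by
          apply measure_mono
          intro ω hω
          obtain ⟨k, hk, f, ⟨hinj, hedge⟩, h0, hlast⟩ := nbhd_mem_path (m+1) v u hω
          exact Set.mem_biUnion (Finset.mem_range.mpr (by omega))
            (Set.mem_biUnion
              (Finset.mem_filter.mpr ⟨Finset.mem_univ f, hinj, h0, hlast⟩) hedge)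
      _ ≤ ∑ k ∈ Finset.range (m+2), P (⋃ f ∈ Finset.univ.filter
              (fun f : Fin (k+1) → Fin n =>
                Function.Injective f ∧ f 0 = v ∧ f (Fin.last k) = u),
              {ω | ∀ i : Fin k, X (f i.castSucc) (f i.succ) ω = true}) :=
          measure_biUnion_finset_le _ _
      _ ≤ ∑ k ∈ Finset.range (m+2), ∑ f ∈ Finset.univ.filter
              (fun f : Fin (k+1) → Fin n =>
                Function.Injective f ∧ f 0 = v ∧ f (Fin.last k) = u),
              P {ω | ∀ i : Fin k, X (f i.castSucc) (f i.succ) ω = true} :=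
          Finset.sum_le_sum fun k _ => measure_biUnion_finset_le _ _
      _ ≤ ∑ k ∈ Finset.range (m+2), ∑ f ∈ Finset.univ.filter
              (fun f : Fin (k+1) → Fin n =>
                Function.Injective f ∧ f 0 = v ∧ f (Fin.last k) = u),
              ENNReal.ofReal (pathW n θ W k f) := by
          apply Finset.sum_le_sum
          intro k _
          apply Finset.sum_le_sum
          intro f hf
          obtain ⟨-, hinj, h0, hlast⟩ := Finset.mem_filter.mp hf
          rw [path_prob P X hsymm hindep k f hinj]
          calc ∏ i : Fin k, P {ω | X (f i.castSucc) (f i.succ) ω = true}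
              ≤ ∏ i : Fin k,
                  ENNReal.ofReal (W (f i.castSucc) * W (f i.succ) / (n * θ)) := by
                apply Finset.prod_le_prod'
                intro i _
                have hne : f i.castSucc ≠ f i.succ := by
                  intro hh
                  have h3 := congrArg Fin.val (hinj hh)
                  simp [Fin.val_succ] at h3
                rw [hdist _ _ hne]
                exact ENNReal.ofReal_le_ofReal (min_le_left _ _)
            _ = ENNReal.ofReal (pathW n θ W k f) := by
                rw [pathW, ← ENNReal.ofReal_prod_of_nonneg]
                intro i _
                exact div_nonneg (mul_nonneg (hW _).le (hW _).le) hnθ.le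
      _ = ENNReal.ofReal (∑ k ∈ Finset.range (m+2), ∑ f ∈ Finset.univ.filter
              (fun f : Fin (k+1) → Fin n =>
                Function.Injective f ∧ f 0 = v ∧ f (Fin.last k) = u),
              pathW n θ W k f) := by
          rw [ENNReal.ofReal_sum_of_nonneg
            (fun k _ => Finset.sum_nonneg fun f _ => hpw0 k f)]
          exact Finset.sum_congr rfl fun k _ =>
            (ENNReal.ofReal_sum_of_nonneg fun f _ => hpw0 k f).symm
  -- Step 3 : sum over u and reorganize
  have h3 : ∀ k : ℕ,
      (∑ u : Fin n, ∑ f ∈ Finset.univ.filter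
          (fun f : Fin (k+1) → Fin n =>
            Function.Injective f ∧ f 0 = v ∧ f (Fin.last k) = u),
          pathW n θ W k f * c u)
        ≤ Fsum n θ W v k c := by
    intro k
    have hsub : ∀ u : Fin n,
        (∑ f ∈ Finset.univ.filter
            (fun f : Fin (k+1) → Fin n =>
              Function.Injective f ∧ f 0 = v ∧ f (Fin.last k) = u),
            pathW n θ W k f * c u)
          ≤ ∑ f ∈ Finset.univ.filter
              (fun f : Fin (k+1) → Fin n => f 0 = v ∧ f (Fin.last k) = u),
              pathW n θ W k f * c u := by
      intro u
      apply Finset.sum_le_sum_of_subset_of_nonneg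
      · intro f hf
        rw [Finset.mem_filter] at hf ⊢
        exact ⟨hf.1, hf.2.2⟩
      · intro f _ _
        exact mul_nonneg (hpw0 k f) (hc0 u)
    calc (∑ u : Fin n, ∑ f ∈ Finset.univ.filter
            (fun f : Fin (k+1) → Fin n =>
              Function.Injective f ∧ f 0 = v ∧ f (Fin.last k) = u),
            pathW n θ W k f * c u)
        ≤ ∑ u : Fin n, ∑ f ∈ Finset.univ.filter
            (fun f : Fin (k+1) → Fin n => f 0 = v ∧ f (Fin.last k) = u),
            pathW n θ W k f * c u := Finset.sum_le_sum fun u _ => hsub u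
      _ = ∑ u : Fin n, ∑ f ∈ (Finset.univ.filter
            (fun f : Fin (k+1) → Fin n => f 0 = v)).filter
              (fun f => f (Fin.last k) = u),
            pathW n θ W k f * c (f (Fin.last k)) := by
          apply Finset.sum_congr rfl
          intro u _
          rw [Finset.filter_filter]
          apply Finset.sum_congr rfl
          intro f hf
          rw [(Finset.mem_filter.mp hf).2.2]
      _ = ∑ f ∈ Finset.univ.filter (fun f : Fin (k+1) → Fin n => f 0 = v),
            pathW n θ W k f * c (f (Fin.last k)) :=
          Finset.sum_fiberwise _ _ _
      _ = Fsum n θ W v k c := by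
          rw [Fsum, Finset.sum_filter]
  calc (∑ u : Fin n,
        (P {ω | u ∈ nbhd (fun a b => X a b ω = true) (m+1) v}).toReal * c u)
      ≤ ∑ u : Fin n, (∑ k ∈ Finset.range (m+2), ∑ f ∈ Finset.univ.filter
            (fun f : Fin (k+1) → Fin n =>
              Function.Injective f ∧ f 0 = v ∧ f (Fin.last k) = u),
            pathW n θ W k f) * c u :=
        Finset.sum_le_sum fun u _ => mul_le_mul_of_nonneg_right (h2 u) (hc0 u)
    _ = ∑ k ∈ Finset.range (m+2), ∑ u : Fin n, ∑ f ∈ Finset.univ.filter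
            (fun f : Fin (k+1) → Fin n =>
              Function.Injective f ∧ f 0 = v ∧ f (Fin.last k) = u),
            pathW n θ W k f * c u := by
        rw [Finset.sum_comm]
        apply Finset.sum_congr rfl
        intro u _
        rw [Finset.sum_mul]
        apply Finset.sum_congr rfl
        intro k _
        rw [Finset.sum_mul]
    _ ≤ ∑ k ∈ Finset.range (m+2), Fsum n θ W v k c :=
        Finset.sum_le_sum fun k _ => h3 k
    _ ≤ c v + W v * (Gam n θ W 2 + 1) ^ (m + 1 - 1) * kap n θ W 2 := by
        have hGam : Gam n θ W 2 = (∑ u : Fin n, W u ^ 2) / (n * θ) := by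
          unfold Gam
          congr 1
          apply Finset.sum_congr rfl
          intro u _
          rw [show (2:ℝ) = ((2:ℕ):ℝ) by norm_num, Real.rpow_natCast]
        have hkap : kap n θ W 2
            = (∑ u : Fin n, if Real.sqrt (n * θ) < W u then W u ^ 2 else 0) / (n * θ) := by
          unfold kap
          congr 1
          apply Finset.sum_congr rfl
          intro u _
          split_ifs
          · rw [show (2:ℝ) = ((2:ℕ):ℝ) by norm_num, Real.rpow_natCast]
          · rfl
        set G : ℝ := (∑ u : Fin n, W u ^ 2) / (n * θ) with hGdef
        set κ : ℝ := (∑ u : Fin n, if Real.sqrt (n * θ) < W u then W u ^ 2 else 0) / (n * θ)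
          with hκdef
        have hG0 : 0 ≤ G := by
          rw [hGdef]
          exact div_nonneg (Finset.sum_nonneg fun u _ => sq_nonneg _) hnθ.le
        have hκ0 : 0 ≤ κ := by
          rw [hκdef]
          refine div_nonneg (Finset.sum_nonneg fun u _ => ?_) hnθ.le
          split_ifs
          · exact sq_nonneg _
          · exact le_refl 0
        have hgeom : ∑ k ∈ Finset.range (m+1), G ^ k ≤ (G + 1) ^ m := by
          calc ∑ k ∈ Finset.range (m+1), G ^ k
              ≤ ∑ k ∈ Finset.range (m+1), G ^ k * 1 ^ (m - k) * (m.choose k : ℝ) := by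
                apply Finset.sum_le_sum
                intro k hk
                have hk' : k ≤ m := by
                  have := Finset.mem_range.mp hk
                  omega
                have h1' : (1:ℝ) ≤ (m.choose k : ℝ) := by
                  exact_mod_cast Nat.succ_le_of_lt (Nat.choose_pos hk')
                have h2' : (0:ℝ) ≤ G ^ k := pow_nonneg hG0 k
                rw [one_pow, mul_one]
                exact le_mul_of_one_le_right h2' h1' 
            _ = (G + 1) ^ m := (add_pow G 1 m).symm
        rw [Finset.sum_range_succ', Fsum_zero]
        have hFs : ∀ k : ℕ, Fsum n θ W v (k+1) c = W v * G ^ k * κ := by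
          intro k
          rw [hc, hGdef, hκdef]
          exact Fsum_cplus n θ W v k
        rw [Finset.sum_congr rfl fun k _ => hFs k]
        rw [add_comm]
        rw [hGam, hkap, Nat.add_sub_cancel]
        apply add_le_add le_rfl
        calc ∑ k ∈ Finset.range (m+1), W v * G ^ k * κ
            = W v * κ * ∑ k ∈ Finset.range (m+1), G ^ k := by
              rw [Finset.mul_sum]
              apply Finset.sum_congr rfl
              intro k _
              ring
          _ ≤ W v * κ * (G + 1) ^ m :=
              mul_le_mul_of_nonneg_left hgeom (mul_nonneg (hW v).le hκ0)
          _ = W v * (G + 1) ^ m * κ := by ring
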